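/- arXiv:1305.6118 — 3 statements merged into one kernel-verified Lean document; each statement's English description precedes it below -/
import Mathlib

section
/- Let k > 1 and m ≥ 1 be integers with gcd(k,m) = 1. Then ∑_{ξ ∈ Ξ_m} M_k(ξ) = 0, where M_k is the necklace polynomial and Ξ_m is the set of primitive m-th roots of unity in ℂ. -/
open Finset ArithmeticFunction

lemma sum_moebius_div_divisors (k : ℕ) (hk : 1 < k) :
    ∑ j ∈ Nat.divisors k, (ArithmeticFunction.moebius (k / j) : ℂ) = 0 := by
  have h : ∑ j ∈ Nat.divisors k, (ArithmeticFunction.moebius (k / j) : ℤ) = 0 := by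
    rw [Nat.sum_div_divisors]
    have h2 : ((ArithmeticFunction.moebius * ArithmeticFunction.zeta : ArithmeticFunction ℤ)) k
        = (1 : ArithmeticFunction ℤ) k := by
      rw [ArithmeticFunction.moebius_mul_coe_zeta]
    rwa [ArithmeticFunction.coe_mul_zeta_apply, ArithmeticFunction.one_apply,
      if_neg (Nat.ne_of_gt hk)] at h2
  have := congrArg (fun z : ℤ => (z : ℂ)) h
  exact_mod_cast h

lemma sum_pow_primitiveRoots (m j : ℕ) (hm : 0 < m) (hj : Nat.Coprime j m) :
    ∑ ξ ∈ primitiveRoots m ℂ, ξ ^ j = ∑ ξ ∈ primitiveRoots m ℂ, ξ := by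
  rcases eq_or_lt_of_le (Nat.one_le_iff_ne_zero.mpr hm.ne') with h1 | h1
  · simp [← h1]
  obtain ⟨i, -, hi⟩ := Nat.exists_mul_mod_eq_one_of_coprime hj h1
  refine Finset.sum_nbij' (fun ξ => ξ ^ j) (fun ξ => ξ ^ i) ?_ ?_ ?_ ?_ ?_
  · intro ξ hξ
    rw [mem_primitiveRoots hm] at hξ ⊢
    exact hξ.pow_of_coprime j hj
  · intro ξ hξ
    rw [mem_primitiveRoots hm] at hξ ⊢
    have hji : Nat.Coprime i m := by
      apply Nat.coprime_of_mul_modEq_one j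
      show i * j % m = 1 % m
      rw [mul_comm, hi, Nat.mod_eq_of_lt h1]
    exact hξ.pow_of_coprime i hji
  · intro ξ hξ
    rw [mem_primitiveRoots hm] at hξ
    show (ξ ^ j) ^ i = ξ
    rw [← pow_mul, pow_eq_pow_mod (j * i) hξ.pow_eq_one, hi, pow_one]
  · intro ξ hξ
    rw [mem_primitiveRoots hm] at hξ
    show (ξ ^ i) ^ j = ξ
    rw [← pow_mul, mul_comm i j, pow_eq_pow_mod (j * i) hξ.pow_eq_one, hi, pow_one]
  · exact fun ξ _ => rfl

theorem stmt_8 (k m : ℕ) (hk : 1 < k) (hm : 1 ≤ m) (hkm : Nat.Coprime k m) :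
    (∑ ξ ∈ primitiveRoots m ℂ,
      ((1 : ℂ) / k) * ∑ j ∈ Nat.divisors k, (ArithmeticFunction.moebius (k / j) : ℂ) * ξ ^ j)
      = 0 := by
  rw [← Finset.mul_sum, Finset.sum_comm]
  have hstep : ∀ j ∈ Nat.divisors k,
      (∑ ξ ∈ primitiveRoots m ℂ, (ArithmeticFunction.moebius (k / j) : ℂ) * ξ ^ j)
      = (ArithmeticFunction.moebius (k / j) : ℂ) * ∑ ξ ∈ primitiveRoots m ℂ, ξ := by
    intro j hj
    rw [← Finset.mul_sum, sum_pow_primitiveRoots m j hm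
      (Nat.Coprime.coprime_dvd_left (Nat.mem_divisors.mp hj).1 hkm)]
  rw [Finset.sum_congr rfl hstep, ← Finset.sum_mul,
    sum_moebius_div_divisors k hk, zero_mul, mul_zero]
end

section
/- Let λ₁,…,λ_n be complex numbers and (ℓ_k) non-negative integers satisfying ∏_{k≥1}(1-y^k)^{-ℓ_k} = ∏_{i=1}^n (1-λ_i y)^{-1} in ℂ[[y]]. Then for every m ≥ 1, ∑_{k | m} k·ℓ_k = ∑_{i=1}^n λ_i^m. -/
open Polynomial

/-- The formal power series identity `∏_{k≥1} (1-y^k)^{-ℓ_k} = ∏_{i=1}^n (1-λ_i y)^{-1}`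
in `ℂ[[y]]`, encoded equivalently as: for every `N`, the polynomials
`∏_{i=1}^n (1-λ_i y)` and `∏_{k=1}^N (1-y^k)^{ℓ_k}` agree in all coefficients of
degree `≤ N` (the omitted factors with `k > N` are `≡ 1 mod y^{N+1}`). -/
def EulerProductIdentity (n : ℕ) (lam : Fin n → ℂ) (l : ℕ → ℕ) : Prop :=
  ∀ N : ℕ, ∀ j : ℕ, j ≤ N →
    (∏ i : Fin n, (1 - C (lam i) * X)).coeff j =
      (∏ k ∈ Finset.Icc 1 N, ((1 - X ^ k) ^ (l k) : Polynomial ℂ)).coeff j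

section auxLD
open PowerSeries

/-- Logarithmic derivative of a power series. -/
noncomputable def LD (F : PowerSeries ℂ) : PowerSeries ℂ := F.derivativeFun * F⁻¹

lemma LD_mul (F G : PowerSeries ℂ) (hF : constantCoeff F ≠ 0) (hG : constantCoeff G ≠ 0) :
    LD (F * G) = LD F + LD G := by
  have h1 := PowerSeries.mul_inv_cancel F hF
  have h2 := PowerSeries.mul_inv_cancel G hG
  unfold LD
  rw [PowerSeries.derivativeFun_mul, PowerSeries.mul_inv_rev, smul_eq_mul, smul_eq_mul]
  linear_combination (G.derivativeFun * G⁻¹) * h1 + (F.derivativeFun * F⁻¹) * h2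

lemma LD_prod' {α : Type*} (s : Finset α) (F : α → PowerSeries ℂ)
    (hF : ∀ a ∈ s, constantCoeff (F a) ≠ 0) :
    LD (∏ a ∈ s, F a) = ∑ a ∈ s, LD (F a) := by
  induction s using Finset.cons_induction with
  | empty => simp [LD, PowerSeries.derivativeFun_one]
  | cons a s ha ih =>
    rw [Finset.prod_cons, Finset.sum_cons, LD_mul, ih fun b hb => hF b (Finset.mem_cons_of_mem hb)]
    · exact hF a (Finset.mem_cons_self a s)
    · rw [map_prod]
      exact Finset.prod_ne_zero_iff.mpr fun b hb => hF b (Finset.mem_cons_of_mem hb)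

lemma LD_pow' (F : PowerSeries ℂ) (hF : constantCoeff F ≠ 0) (e : ℕ) :
    LD (F ^ e) = e • LD F := by
  induction e with
  | zero => simp [LD, PowerSeries.derivativeFun_one]
  | succ e ih =>
    rw [pow_succ, LD_mul _ _ (by rw [map_pow]; exact pow_ne_zero _ hF) hF, ih, succ_nsmul]

lemma geom_inv (a : ℂ) :
    (1 - PowerSeries.C a * PowerSeries.X)⁻¹ = PowerSeries.mk fun n => a ^ n := by
  rw [PowerSeries.inv_eq_iff_mul_eq_one]
  · rw [mul_comm]
    ext j
    rw [sub_mul, one_mul, mul_assoc]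
    cases j with
    | zero => simp
    | succ j => simp [PowerSeries.coeff_succ_X_mul, pow_succ, mul_comm]
  · simp

lemma coeff_derivativeFun' (f : PowerSeries ℂ) (n : ℕ) :
    PowerSeries.coeff n f.derivativeFun = PowerSeries.coeff (n + 1) f * (n + 1) :=
  PowerSeries.coeff_derivative f n

lemma deriv_one_sub (a : ℂ) :
    (1 - PowerSeries.C a * PowerSeries.X).derivativeFun = - PowerSeries.C a := by
  ext j
  simp [coeff_derivativeFun', PowerSeries.coeff_C, PowerSeries.coeff_one,
    PowerSeries.coeff_X]
  rcases j with _ | j <;> simp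

lemma coeff_LD_one_sub' (a : ℂ) (m : ℕ) (hm : 1 ≤ m) :
    PowerSeries.coeff (m-1) (LD (1 - PowerSeries.C a * PowerSeries.X)) = -(a ^ m) := by
  obtain ⟨t, rfl⟩ : ∃ t, m = t + 1 := ⟨m - 1, by omega⟩
  unfold LD
  rw [deriv_one_sub, geom_inv, neg_mul]
  simp only [map_neg, Nat.add_sub_cancel, neg_inj]
  rw [PowerSeries.coeff_C_mul, PowerSeries.coeff_mk, pow_succ']

lemma geom_pow_inv (k : ℕ) (hk : 1 ≤ k) :
    ((1 : PowerSeries ℂ) - PowerSeries.X ^ k)⁻¹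
      = PowerSeries.mk fun n => if k ∣ n then 1 else 0 := by
  rw [PowerSeries.inv_eq_iff_mul_eq_one]
  · rw [mul_comm]
    ext j
    rw [sub_mul, one_mul]
    by_cases hj : k ≤ j
    · obtain ⟨t, rfl⟩ := Nat.exists_eq_add_of_le hj
      rw [add_comm, map_sub, PowerSeries.coeff_X_pow_mul]
      simp only [PowerSeries.coeff_mk]
      have hdvd : k ∣ t + k ↔ k ∣ t := by
        constructor
        · intro h; exact (Nat.dvd_add_right (dvd_refl k)).mp (by rwa [add_comm] at h)
        · intro h; exact Nat.dvd_add h (dvd_refl k)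
      have hj0 : t + k ≠ 0 := by omega
      rw [PowerSeries.coeff_one, if_neg hj0]
      by_cases h : k ∣ t
      · simp [h, hdvd.mpr h]
      · simp [h, fun hh => h (hdvd.mp hh)]
    · have : (PowerSeries.coeff j)
          (PowerSeries.X ^ k * PowerSeries.mk fun n => if k ∣ n then (1:ℂ) else 0) = 0 := by
        rw [PowerSeries.coeff_X_pow_mul'] ; simp [hj]
      rw [map_sub, this, sub_zero, PowerSeries.coeff_mk, PowerSeries.coeff_one]
      rcases Nat.eq_zero_or_pos j with rfl | hjpos
      · simp
      · rw [if_neg (fun h => hj (Nat.le_of_dvd hjpos h)), if_neg (by omega)]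
  · simp [zero_pow (by omega : k ≠ 0)]

lemma deriv_one_sub_pow (k : ℕ) (hk : 1 ≤ k) :
    ((1 : PowerSeries ℂ) - PowerSeries.X ^ k).derivativeFun
      = -((k : ℂ) • PowerSeries.X ^ (k - 1)) := by
  obtain ⟨t, rfl⟩ : ∃ t, k = t + 1 := ⟨k - 1, by omega⟩
  ext j
  simp only [coeff_derivativeFun', map_sub, map_neg, PowerSeries.coeff_smul,
    PowerSeries.coeff_one, PowerSeries.coeff_X_pow, smul_eq_mul, Nat.add_sub_cancel]
  rcases eq_or_ne j t with rfl | hne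
  · rw [if_neg (by omega), if_pos rfl, if_pos rfl]
    push_cast
    ring
  · rw [if_neg (by omega), if_neg (by omega), if_neg hne]
    ring

lemma coeff_LD_one_sub_pow' (k : ℕ) (hk : 1 ≤ k) (m : ℕ) (hm : 1 ≤ m) :
    PowerSeries.coeff (m-1) (LD (1 - PowerSeries.X ^ k)) = -(if k ∣ m then (k:ℂ) else 0) := by
  unfold LD
  rw [deriv_one_sub_pow k hk, geom_pow_inv k hk, neg_mul, map_neg, smul_mul_assoc, map_smul,
    PowerSeries.coeff_X_pow_mul', smul_eq_mul, neg_inj]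
  by_cases hkm : k ≤ m
  · rw [if_pos (by omega)]
    rw [PowerSeries.coeff_mk]
    have h2 : m - 1 - (k - 1) = m - k := by omega
    have h3 : k ∣ m - k ↔ k ∣ m := by
      constructor
      · intro h; have := Nat.dvd_add h (dvd_refl k); rwa [Nat.sub_add_cancel hkm] at this
      · intro h; exact Nat.dvd_sub h (dvd_refl k)
    rw [h2]
    by_cases h : k ∣ m
    · rw [if_pos (h3.mpr h), if_pos h, mul_one]
    · rw [if_neg (fun hh => h (h3.mp hh)), if_neg h, mul_zero]
  · rw [if_neg (by omega), if_neg (fun h => hkm (Nat.le_of_dvd (by omega) h)), mul_zero]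

end auxLD

theorem stmt_12 (n : ℕ) (lam : Fin n → ℂ) (l : ℕ → ℕ)
    (h : EulerProductIdentity n lam l) :
    ∀ m : ℕ, 1 ≤ m →
      (∑ k ∈ Nat.divisors m, (k : ℂ) * (l k : ℂ)) = ∑ i : Fin n, lam i ^ m := by
  intro m hm
  set p : PowerSeries ℂ := ∏ i : Fin n, (1 - PowerSeries.C (lam i) * PowerSeries.X) with hp
  set q : PowerSeries ℂ := ∏ k ∈ Finset.Icc 1 m, ((1 - PowerSeries.X ^ k) ^ (l k)) with hq
  have hPp : ((∏ i : Fin n, (1 - C (lam i) * X) : Polynomial ℂ) : PowerSeries ℂ) = p := by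
    rw [hp, ← Polynomial.coeToPowerSeries.ringHom_apply, map_prod]
    refine Finset.prod_congr rfl fun i _ => ?_
    simp [Polynomial.coeToPowerSeries.ringHom_apply, Polynomial.coe_sub]
  have hQq : ((∏ k ∈ Finset.Icc 1 m, ((1 - X ^ k) ^ (l k)) : Polynomial ℂ) : PowerSeries ℂ) = q := by
    rw [hq, ← Polynomial.coeToPowerSeries.ringHom_apply, map_prod]
    refine Finset.prod_congr rfl fun k _ => ?_
    simp [Polynomial.coeToPowerSeries.ringHom_apply, Polynomial.coe_sub]
  have hpc : ∀ i : Fin n, PowerSeries.constantCoeff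
      (1 - PowerSeries.C (lam i) * PowerSeries.X) ≠ 0 := by
    intro i; simp
  have hqc : ∀ k ∈ Finset.Icc 1 m, PowerSeries.constantCoeff
      (((1 : PowerSeries ℂ) - PowerSeries.X ^ k) ^ (l k)) ≠ 0 := by
    intro k hk
    have hk1 : k ≠ 0 := by simp at hk; omega
    rw [map_pow]
    apply pow_ne_zero
    simp [zero_pow hk1]
  have hpc' : PowerSeries.constantCoeff p ≠ 0 := by
    rw [hp, map_prod]
    exact Finset.prod_ne_zero_iff.mpr fun i _ => hpc i
  have hqc' : PowerSeries.constantCoeff q ≠ 0 := by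
    rw [hq, map_prod]
    exact Finset.prod_ne_zero_iff.mpr hqc
  have hdiv : (PowerSeries.X : PowerSeries ℂ) ^ (m+1) ∣ (p - q) := by
    rw [PowerSeries.X_pow_dvd_iff]
    intro j hj
    rw [map_sub, ← hPp, ← hQq, Polynomial.coeff_coe, Polynomial.coeff_coe,
      h m j (by omega), sub_self]
  have hdiv' : (PowerSeries.X : PowerSeries ℂ) ^ m ∣ (p.derivativeFun - q.derivativeFun) := by
    rw [PowerSeries.X_pow_dvd_iff]
    intro j hj
    rw [map_sub, coeff_derivativeFun', coeff_derivativeFun',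
      ← sub_mul, ← map_sub, PowerSeries.X_pow_dvd_iff.mp hdiv (j+1) (by omega), zero_mul]
  have hD : (PowerSeries.X : PowerSeries ℂ) ^ m ∣
      (p.derivativeFun * q - q.derivativeFun * p) := by
    have heq : p.derivativeFun * q - q.derivativeFun * p
        = p.derivativeFun * -(p - q) + (p.derivativeFun - q.derivativeFun) * p := by ring
    rw [heq]
    exact dvd_add (Dvd.dvd.mul_left ((dvd_neg.mpr ((pow_dvd_pow _ (by omega)).trans hdiv))) _)
      (hdiv'.mul_right _)
  have key : PowerSeries.coeff (m-1) (LD p) = PowerSeries.coeff (m-1) (LD q) := by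
    have h1 := PowerSeries.mul_inv_cancel p hpc'
    have h2 := PowerSeries.mul_inv_cancel q hqc'
    have halg : LD p - LD q = (p.derivativeFun * q - q.derivativeFun * p) * (p⁻¹ * q⁻¹) := by
      unfold LD
      linear_combination (q.derivativeFun * q⁻¹) * h1 - (p.derivativeFun * p⁻¹) * h2
    have hd : (PowerSeries.X : PowerSeries ℂ) ^ m ∣ (LD p - LD q) := by
      rw [halg]; exact hD.mul_right _
    have := PowerSeries.X_pow_dvd_iff.mp hd (m-1) (by omega)
    rw [map_sub, sub_eq_zero] at this
    exact this
  have hLp : PowerSeries.coeff (m-1) (LD p) = -∑ i : Fin n, lam i ^ m := by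
    rw [hp, LD_prod' _ _ (fun i _ => hpc i), map_sum, ← Finset.sum_neg_distrib]
    exact Finset.sum_congr rfl fun i _ => coeff_LD_one_sub' (lam i) m hm
  have hLq : PowerSeries.coeff (m-1) (LD q) = -∑ k ∈ Nat.divisors m, (k : ℂ) * (l k : ℂ) := by
    rw [hq, LD_prod' _ _ hqc, map_sum]
    have step : ∀ k ∈ Finset.Icc 1 m,
        PowerSeries.coeff (m-1) (LD ((1 - PowerSeries.X ^ k) ^ (l k)))
          = -(if k ∣ m then (k:ℂ) * (l k : ℂ) else 0) := by
      intro k hk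
      have hk1 : 1 ≤ k := by simp at hk; omega
      rw [LD_pow' _ (by simp [zero_pow (by omega : k ≠ 0)]) (l k), map_nsmul,
        coeff_LD_one_sub_pow' k hk1 m hm, nsmul_eq_mul]
      by_cases hd : k ∣ m <;> simp [hd] <;> ring
    rw [Finset.sum_congr rfl step, Finset.sum_neg_distrib, neg_inj, Finset.sum_ite,
      Finset.sum_const_zero, add_zero]
    have hfil : Finset.filter (fun k => k ∣ m) (Finset.Icc 1 m) = Nat.divisors m := by
      rw [Nat.divisors, Finset.Ico_add_one_right_eq_Icc]
    rw [hfil]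
  rw [hLp, hLq, neg_inj] at key
  exact key.symm
end

section
/- Let χ(y) = ∏_{i=1}^n (1 - λ_i y) ∈ ℤ[y] be a polynomial with integer coefficients, constant term 1, and λ_i ∈ ℂ nonzero with max_i |λ_i| = 1. Then every λ_i is a root of unity. -/
open Polynomial IntermediateField

lemma aux_reflect_prod {n : ℕ} (lam : Fin n → ℂ) (s : Finset (Fin n)) :
    reflect s.card (∏ i ∈ s, (1 - C (lam i) * X)) = ∏ i ∈ s, (X - C (lam i)) := by
  induction s using Finset.cons_induction with
  | empty => simp [reflect_one]
  | cons a s ha ih =>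
    rw [Finset.prod_cons, Finset.prod_cons, Finset.card_cons, add_comm s.card 1,
      reflect_mul _ _ (by
        have h1 : natDegree (C (lam a) * X) ≤ 1 := by
          simpa using natDegree_C_mul_le (lam a) X
        calc natDegree (1 - C (lam a) * X) ≤ max (natDegree (1 : ℂ[X])) (natDegree (C (lam a) * X)) :=
              natDegree_sub_le _ _
          _ ≤ 1 := by simp [h1])
        (by
          refine le_trans (natDegree_prod_le _ _) ?_
          calc ∑ i ∈ s, natDegree (1 - C (lam i) * X)
              ≤ ∑ _i ∈ s, 1 := by
                refine Finset.sum_le_sum fun i _ => ?_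
                have h1 : natDegree (C (lam i) * X) ≤ 1 := by
                  simpa using natDegree_C_mul_le (lam i) X
                calc natDegree (1 - C (lam i) * X)
                    ≤ max (natDegree (1 : ℂ[X])) (natDegree (C (lam i) * X)) :=
                      natDegree_sub_le _ _
                  _ ≤ 1 := by simp [h1]
            _ = s.card := by simp),
      ih]
    congr 1
    have : (1 : ℂ[X]) - C (lam a) * X = 1 - C (lam a) * X ^ 1 := by ring
    rw [this, reflect_sub, reflect_C_mul_X_pow, reflect_one]
    simp

theorem stmt_14 (n : ℕ) (lam : Fin n → ℂ) (hne : ∀ i, lam i ≠ 0)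
    (hint : ∃ p : Polynomial ℤ, p.map (Int.castRingHom ℂ) = ∏ i : Fin n, (1 - C (lam i) * X))
    (hle : ∀ i, ‖lam i‖ ≤ 1) (hmax : ∃ i, ‖lam i‖ = 1) :
    ∀ i, ∃ m : ℕ, 0 < m ∧ lam i ^ m = 1 := by
  obtain ⟨p, hp⟩ := hint
  -- the reversed polynomial
  set q : Polynomial ℤ := reflect n p with hqdef
  have hq : q.map (Int.castRingHom ℂ) = ∏ i : Fin n, (X - C (lam i)) := by
    rw [hqdef, ← reflect_map, hp]
    have h := aux_reflect_prod lam Finset.univ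
    simpa using h
  have hqmonic : q.Monic := by
    apply monic_of_injective (f := Int.castRingHom ℂ) Int.cast_injective
    rw [hq]
    exact monic_prod_of_monic _ _ fun i _ => monic_X_sub_C _
  -- each lam i is a root of q over ℂ
  have haq : ∀ i, eval₂ (Int.castRingHom ℂ) (lam i) q = 0 := by
    intro i
    rw [eval₂_eq_eval_map, hq, eval_prod]
    exact Finset.prod_eq_zero (Finset.mem_univ i) (by simp)
  -- every complex root of q is some lam j
  have hroot : ∀ z : ℂ, eval₂ (Int.castRingHom ℂ) z q = 0 → ∃ j, z = lam j := by
    intro z hz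
    rw [eval₂_eq_eval_map, hq, eval_prod] at hz
    obtain ⟨j, -, hj⟩ := Finset.prod_eq_zero_iff.mp hz
    exact ⟨j, by simpa [sub_eq_zero] using hj⟩
  -- all |lam i| = 1
  have hconst : ((q.coeff 0 : ℤ) : ℂ) = ∏ i : Fin n, (0 - lam i) := by
    have := congrArg (fun r => Polynomial.eval (0 : ℂ) r) hq
    simpa [eval_prod, coeff_zero_eq_eval_zero] using this
  have hc0 : q.coeff 0 ≠ 0 := by
    intro h
    rw [h] at hconst
    have : ∃ i ∈ Finset.univ, (0 : ℂ) - lam i = 0 :=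
      Finset.prod_eq_zero_iff.mp (by exact_mod_cast hconst.symm)
    obtain ⟨i, -, hi⟩ := this
    exact hne i (by simpa [sub_eq_zero] using hi.symm)
  have habs1 : ∀ i, ‖lam i‖ = 1 := by
    intro i
    refine le_antisymm (hle i) ?_
    have h1 : (1 : ℝ) ≤ ‖((q.coeff 0 : ℤ) : ℂ)‖ := by
      rw [Complex.norm_intCast]
      exact_mod_cast Int.one_le_abs hc0
    have h2 : ‖((q.coeff 0 : ℤ) : ℂ)‖ = ∏ j : Fin n, ‖lam j‖ := by
      rw [hconst, norm_prod]
      simp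
    rw [h2, ← Finset.mul_prod_erase Finset.univ _ (Finset.mem_univ i)] at h1
    have h3 : ∏ j ∈ Finset.univ.erase i, ‖lam j‖ ≤ 1 :=
      Finset.prod_le_one (fun j _ => norm_nonneg _) (fun j _ => hle j)
    calc (1 : ℝ) ≤ ‖lam i‖ * ∏ j ∈ Finset.univ.erase i, ‖lam j‖ := h1
      _ ≤ ‖lam i‖ * 1 :=
          mul_le_mul_of_nonneg_left h3 (norm_nonneg _)
      _ = ‖lam i‖ := mul_one _
  -- integrality
  have hintegral : ∀ i, IsIntegral ℤ (lam i) := fun i => ⟨q, hqmonic, haq i⟩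
  intro i
  have hxQ : IsIntegral ℚ (lam i) := (hintegral i).tower_top
  let K := ℚ⟮lam i⟯
  haveI : FiniteDimensional ℚ K := IntermediateField.adjoin.finiteDimensional hxQ
  haveI : NumberField K := ⟨⟩
  let xK : K := ⟨lam i, IntermediateField.mem_adjoin_simple_self ℚ (lam i)⟩
  have halg : algebraMap K ℂ xK = lam i := rfl
  have hxKint : IsIntegral ℤ xK := by
    rw [← isIntegral_algebraMap_iff (algebraMap K ℂ).injective, halg]
    exact hintegral i
  have hnorm : ∀ φ : K →+* ℂ, ‖φ xK‖ = 1 := by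
    intro φ
    have h0 : aeval xK q = 0 := by
      apply (algebraMap K ℂ).injective
      rw [← Polynomial.aeval_algebraMap_apply, halg]
      simpa [aeval_def] using haq i
    have h1 : eval₂ (Int.castRingHom ℂ) (φ xK) q = 0 := by
      have h2 := congrArg φ h0
      rw [map_zero, aeval_def, hom_eval₂] at h2
      rwa [Subsingleton.elim (Int.castRingHom ℂ) (φ.comp (algebraMap ℤ K))]
    obtain ⟨j, hj⟩ := hroot _ h1
    rw [hj]
    exact habs1 j
  obtain ⟨m, hm, hpow⟩ := NumberField.Embeddings.pow_eq_one_of_norm_eq_one K ℂ hxKint hnorm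
  refine ⟨m, hm, ?_⟩
  have := congrArg (algebraMap K ℂ) hpow
  rwa [map_pow, map_one, halg] at this
end
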